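/- For every n and K ⊆ [2, n+1], with τ_n(i) = n+3−i and J^max := J ∪ {n+2}: Σ_{J ⊆ [2,n+1]∖K} (−1)^{n−|K|−|J|} (α(J^max)!̂ − α(J)!̂) = Σ_{J ⊆ K} (−1)^{|K|−|J|} (|J|+1) α(τ_n(J))!̂. -/

import Mathlib

open Finset

/-- Positions of descents of a permutation of `Fin (n+1)` in one-line notation. -/
def descSet (n : ℕ) (σ : Equiv.Perm (Fin (n+1))) : Finset (Fin n) :=
  Finset.univ.filter (fun i : Fin n => σ i.succ < σ i.castSucc)

/-- Number of descents. -/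
def des (n : ℕ) (σ : Equiv.Perm (Fin (n+1))) : ℕ := (descSet n σ).card

/-- Descent top set, with values written 1-based (so `DT n σ ⊆ [2, n+1]`). -/
def DT (n : ℕ) (σ : Equiv.Perm (Fin (n+1))) : Finset ℕ :=
  (descSet n σ).image (fun i => (σ i.castSucc : ℕ) + 1)

/-- `β!̂ = (k+1)^{β₁} k^{β₂} ⋯ 2^{β_k}` for a tuple `β` of length `k`. -/
def hatFac (β : List ℕ) : ℕ :=
  (β.zipIdx.map (fun p => (β.length + 1 - p.2) ^ p.1)).prod

/-- `α(X)!̂` where, for `X = {x₁ < … < x_k}`, `α(X) = (x₁ - 1, x₂ - x₁, …, x_k - x_{k-1})`. -/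
def alphaHat (X : Finset ℕ) : ℕ :=
  hatFac (List.zipWith (fun a b => b - a) (1 :: X.sort (· ≤ ·)) (X.sort (· ≤ ·)))

/-! ### Auxiliary development -/

/-- number of elements of `J` greater than `q`, as an integer -/
def aZ (J : Finset ℕ) (q : ℕ) : ℤ := ((J.filter fun x => q < x).card : ℤ)

/-- `∏_{q=1}^{M} (1 + #{x ∈ J : x > q})` -/
def FF (J : Finset ℕ) (M : ℕ) : ℤ := ∏ q ∈ Finset.Ico 1 (M+1), (1 + aZ J q)

/-- the alternating sum of `FF` over subsets of `C` -/
def s0 (C : Finset ℕ) (M : ℕ) : ℤ := ∑ J ∈ C.powerset, (-1)^J.card * FF J M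

lemma neg_one_pow_sub {a b : ℕ} (h : b ≤ a) :
    ((-1 : ℤ))^(a-b) = (-1)^a * (-1)^b := by
  have h1 : ((-1 : ℤ))^b * (-1)^b = 1 := by
    rw [← pow_add, ← two_mul, pow_mul]; norm_num
  calc ((-1:ℤ))^(a-b) = (-1)^(a-b) * ((-1)^b * (-1)^b) := by rw [h1, mul_one]
    _ = ((-1:ℤ))^(a-b+b) * (-1)^b := by rw [pow_add]; ring
    _ = (-1)^a * (-1)^b := by rw [Nat.sub_add_cancel h]

lemma aZ_eq_zero {J : Finset ℕ} {q : ℕ} (h : ∀ x ∈ J, x ≤ q) : aZ J q = 0 := by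
  unfold aZ
  rw [Finset.filter_false_of_mem (fun x hx => by have := h x hx; omega)]
  simp

lemma aZ_all {J : Finset ℕ} {q : ℕ} (h : ∀ x ∈ J, q < x) : aZ J q = J.card := by
  unfold aZ
  rw [Finset.filter_true_of_mem h]

lemma aZ_insert {J : Finset ℕ} {x q : ℕ} (h : x ∉ J) :
    aZ (insert x J) q = aZ J q + if q < x then 1 else 0 := by
  unfold aZ
  rw [Finset.filter_insert]
  split_ifs with hq
  · rw [Finset.card_insert_of_notMem (fun hc => h (Finset.mem_filter.mp hc).1)]
    push_cast; ring
  · simp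

lemma aZ_step (J : Finset ℕ) (q : ℕ) :
    aZ J q = aZ J (q+1) + (if q+1 ∈ J then 1 else 0) := by
  unfold aZ
  by_cases hm : q+1 ∈ J
  · have hset : J.filter (fun x => q < x) = insert (q+1) (J.filter fun x => q+1 < x) := by
      ext a
      simp only [Finset.mem_filter, Finset.mem_insert]
      constructor
      · rintro ⟨h1, h2⟩
        rcases eq_or_ne a (q+1) with rfl | hne
        · exact Or.inl rfl
        · exact Or.inr ⟨h1, by omega⟩
      · rintro (rfl | ⟨h1, h2⟩)
        · exact ⟨hm, by omega⟩
        · exact ⟨h1, by omega⟩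
    rw [hset, Finset.card_insert_of_notMem (by simp), if_pos hm]
    push_cast; ring
  · have hset : J.filter (fun x => q < x) = J.filter fun x => q+1 < x := by
      ext a
      simp only [Finset.mem_filter]
      constructor
      · rintro ⟨h1, h2⟩
        refine ⟨h1, ?_⟩
        rcases eq_or_ne a (q+1) with rfl | hne
        · exact absurd h1 hm
        · omega
      · rintro ⟨h1, h2⟩; exact ⟨h1, by omega⟩
    rw [hset, if_neg hm]
    simp

lemma aZ_image_pred {J : Finset ℕ} {q : ℕ} (h : ∀ x ∈ J, 1 ≤ x) :
    aZ (J.image (· - 1)) q = aZ J (q+1) := by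
  unfold aZ
  have hset : (J.image (· - 1)).filter (fun y => q < y)
      = (J.filter fun x => q+1 < x).image (· - 1) := by
    ext y
    simp only [Finset.mem_filter, Finset.mem_image]
    constructor
    · rintro ⟨⟨x, hx, rfl⟩, hq⟩
      exact ⟨x, ⟨hx, by have := h x hx; omega⟩, rfl⟩
    · rintro ⟨x, ⟨hx, hq⟩, rfl⟩
      exact ⟨⟨x, hx, rfl⟩, by have := h x hx; omega⟩
  rw [hset, Finset.card_image_of_injOn]
  intro x hx y hy e
  have hx' := (Finset.mem_filter.mp hx).2
  have hy' := (Finset.mem_filter.mp hy).2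
  have e' : x - 1 = y - 1 := e
  omega
lemma FF_dead {J : Finset ℕ} {M : ℕ} (h : ∀ x ∈ J, x ≤ M+1) : FF J (M+1) = FF J M := by
  unfold FF
  rw [Finset.prod_Ico_succ_top (by omega), aZ_eq_zero h]
  simp

lemma FF_tail {J : Finset ℕ} {M : ℕ} (h : ∀ x ∈ J, 3 ≤ x) :
    ∏ q ∈ Finset.Ico 2 (M+2), (1 + aZ J q) = FF (J.image (· - 1)) M := by
  unfold FF
  have himg : Finset.Ico 2 (M+2) = (Finset.Ico 1 (M+1)).image (· + 1) := by
    rw [Finset.image_add_right_Ico]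
  rw [himg, Finset.prod_image (by intro x _ y _ e; simp only at e; omega)]
  refine Finset.prod_congr rfl (fun q _ => ?_)
  rw [aZ_image_pred (fun x hx => by have := h x hx; omega)]

lemma FF_split_bot (J : Finset ℕ) (M : ℕ) :
    FF J (M+1) = (1 + aZ J 1) * ∏ q ∈ Finset.Ico 2 (M+2), (1 + aZ J q) := by
  unfold FF
  rw [show M+1+1 = M+2 by rfl, Finset.prod_eq_prod_Ico_succ_bot (by omega : 1 < M+2)]

lemma FF_shift {J : Finset ℕ} {M : ℕ} (h : ∀ x ∈ J, 3 ≤ x) :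
    FF J (M+1) = (1 + (J.card : ℤ)) * FF (J.image (· - 1)) M := by
  rw [FF_split_bot, FF_tail h, aZ_all (fun x hx => by have := h x hx; omega)]

lemma FF_insert_two {J : Finset ℕ} {M : ℕ} (h : ∀ x ∈ J, 3 ≤ x) (h2 : 2 ∉ J) :
    FF (insert 2 J) (M+1) = FF J (M+1) + FF (J.image (· - 1)) M := by
  have hins : ∀ x ∈ insert 2 J, 2 ≤ x := by
    intro x hx
    rcases Finset.mem_insert.mp hx with rfl | hx'
    · omega
    · have := h x hx'; omega
  have key : FF (insert 2 J) (M+1) = (2 + (J.card : ℤ)) * FF (J.image (· - 1)) M := by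
    rw [FF_split_bot, aZ_all (fun x hx => by have := hins x hx; omega)]
    rw [Finset.card_insert_of_notMem h2]
    have htail : ∏ q ∈ Finset.Ico 2 (M+2), (1 + aZ (insert 2 J) q)
        = ∏ q ∈ Finset.Ico 2 (M+2), (1 + aZ J q) := by
      refine Finset.prod_congr rfl (fun q hq => ?_)
      have hq2 : 2 ≤ q := (Finset.mem_Ico.mp hq).1
      rw [aZ_insert h2, if_neg (by omega)]
      ring
    rw [htail, FF_tail h]
    push_cast; ring
  rw [key, FF_shift h]
  ring
lemma FF_top {M : ℕ} {J : Finset ℕ} (hJ : J ⊆ Finset.Icc 2 (M+1)) :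
    FF (insert (M+2) J) (M+1)
      = ((J.card : ℤ) + 2) * FF J M + ∑ x ∈ Finset.Icc 2 (M+1) \ J, FF (insert x J) M := by
  have hmem : ∀ x ∈ J, 2 ≤ x ∧ x ≤ M+1 := by
    intro x hx
    exact Finset.mem_Icc.mp (hJ hx)
  have hMJ : M+2 ∉ J := fun hc => by have := hmem _ hc; omega
  set T : ℕ → ℤ := fun p =>
    (∏ q ∈ Finset.Ico 1 (p+1), (2 + aZ J q)) * (∏ q ∈ Finset.Ico (p+1) (M+1), (1 + aZ J q))
    with hTdef
  set u : ℕ → ℤ := fun p =>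
    (∏ q ∈ Finset.Ico 1 (p+1), (2 + aZ J q)) * (∏ q ∈ Finset.Ico (p+2) (M+1), (1 + aZ J q))
    with hudef
  have hT0 : T 0 = FF J M := by
    simp [hTdef, FF, Finset.Ico_self]
  have hu : ∀ p, p < M+1 → T (p+1) - T p = u p := by
    intro p hp
    rcases Nat.lt_or_ge p M with hlt | hge
    · simp only [hTdef, hudef]
      rw [Finset.prod_Ico_succ_top (by omega : 1 ≤ p+1) (fun q => 2 + aZ J q)]
      rw [Finset.prod_eq_prod_Ico_succ_bot (by omega : p+1 < M+1) (fun q => 1 + aZ J q)]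
      ring
    · have hpM : M = p := by omega
      subst hpM
      have hz : aZ J (M+1) = 0 := aZ_eq_zero (fun x hx => (hmem x hx).2)
      simp only [hTdef, hudef]
      rw [show Finset.Ico (M+1+1) (M+1) = ∅ from Finset.Ico_eq_empty (by omega),
        show Finset.Ico (M+1) (M+1) = ∅ from Finset.Ico_self _]
      rw [Finset.prod_Ico_succ_top (by omega : 1 ≤ M+1) (fun q => 2 + aZ J q), hz]
      simp only [Finset.prod_empty]
      ring
  have hurel : ∀ p, p < M+1 → (1 + aZ J (p+1)) * u p = T p := by
    intro p hp
    rcases Nat.lt_or_ge (p+1) (M+1) with hlt | hge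
    · simp only [hTdef, hudef]
      rw [Finset.prod_eq_prod_Ico_succ_bot (hlt : p+1 < M+1) (fun q => 1 + aZ J q)]
      ring
    · have hpM : M = p := by omega
      subst hpM
      have hz : aZ J (M+1) = 0 := aZ_eq_zero (fun x hx => (hmem x hx).2)
      simp only [hTdef, hudef, hz]
      rw [show Finset.Ico (M+1) (M+1) = ∅ from Finset.Ico_self _,
        show Finset.Ico (M+2) (M+1) = ∅ from Finset.Ico_eq_empty (by omega)]
      simp only [Finset.prod_empty]
      ring
  have htel : T (M+1) = T 0 + ∑ i ∈ Finset.range (M+1), u i := by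
    have h1 : ∑ i ∈ Finset.range (M+1), (T (i+1) - T i) = T (M+1) - T 0 :=
      Finset.sum_range_sub T (M+1)
    have h2 : ∑ i ∈ Finset.range (M+1), (T (i+1) - T i)
        = ∑ i ∈ Finset.range (M+1), u i := by
      refine Finset.sum_congr rfl (fun i hi => ?_)
      exact hu i (Finset.mem_range.mp hi)
    rw [h2] at h1
    linarith
  -- reindex: sums over Icc 2 (M+1) of T (x-1) equal sums over range M of T (i+1)
  have hreidx : ∀ g : ℕ → ℤ, ∑ x ∈ Finset.Icc 2 (M+1), g x = ∑ i ∈ Finset.range M, g (i+2) := by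
    intro g
    have himg : Finset.Icc 2 (M+1) = (Finset.range M).image (· + 2) := by
      rw [Finset.range_eq_Ico, Finset.image_add_right_Ico]
      exact (Finset.Ico_add_one_right_eq_Icc (0+2) (M+1)).symm
    rw [himg, Finset.sum_image (by intro x _ y _ e; simp only at e; omega)]
  have habel : ∑ i ∈ Finset.range (M+1), aZ J (i+1) * u i
      = (∑ x ∈ J, T (x-1)) - aZ J 1 * T 0 := by
    have e1 : ∀ i, i < M+1 → aZ J (i+1) * u i = aZ J (i+1) * T (i+1) - aZ J (i+1) * T i := by
      intro i hi
      rw [← hu i hi]; ring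
    rw [Finset.sum_congr rfl (fun i hi => e1 i (Finset.mem_range.mp hi))]
    rw [Finset.sum_sub_distrib]
    have e2 : ∑ i ∈ Finset.range (M+1), aZ J (i+1) * T (i+1)
        = ∑ i ∈ Finset.range M, aZ J (i+1) * T (i+1) := by
      rw [Finset.sum_range_succ]
      rw [aZ_eq_zero (fun x hx => (hmem x hx).2)]
      ring
    have e3 : ∑ i ∈ Finset.range (M+1), aZ J (i+1) * T i
        = aZ J 1 * T 0 + ∑ i ∈ Finset.range M, aZ J (i+2) * T (i+1) := by
      rw [Finset.sum_range_succ' (fun i => aZ J (i+1) * T i) M]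
      ring
    rw [e2, e3]
    have e4 : ∑ i ∈ Finset.range M, aZ J (i+1) * T (i+1)
          - ∑ i ∈ Finset.range M, aZ J (i+2) * T (i+1)
        = ∑ i ∈ Finset.range M, (if i+2 ∈ J then (1:ℤ) else 0) * T (i+1) := by
      rw [← Finset.sum_sub_distrib]
      refine Finset.sum_congr rfl (fun i _ => ?_)
      rw [aZ_step J (i+1)]
      ring
    have e5 : ∑ x ∈ J, T (x-1)
        = ∑ i ∈ Finset.range M, (if i+2 ∈ J then (1:ℤ) else 0) * T (i+1) := by
      have hJf : J = (Finset.Icc 2 (M+1)).filter (· ∈ J) := by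
        ext x
        simp only [Finset.mem_filter]
        exact ⟨fun hx => ⟨hJ hx, hx⟩, fun ⟨_, hx⟩ => hx⟩
      conv_lhs => rw [hJf]
      rw [Finset.sum_filter, hreidx (fun x => if x ∈ J then T (x-1) else 0)]
      refine Finset.sum_congr rfl (fun i _ => ?_)
      rw [show i+2-1 = i+1 by omega]
      split_ifs <;> ring
    linarith
  -- identification of the pieces
  have hLHS : FF (insert (M+2) J) (M+1) = T (M+1) := by
    simp only [hTdef]
    rw [show Finset.Ico (M+1+1) (M+1) = ∅ from Finset.Ico_eq_empty (by omega)]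
    rw [Finset.prod_empty, mul_one]
    unfold FF
    refine Finset.prod_congr rfl (fun q hq => ?_)
    have hq' := Finset.mem_Ico.mp hq
    rw [aZ_insert hMJ, if_pos (by omega)]
    ring
  have hFx : ∀ x, 2 ≤ x → x ≤ M+1 → x ∉ J → FF (insert x J) M = T (x-1) := by
    intro x hx2 hxM hxJ
    unfold FF
    simp only [hTdef]
    rw [show x-1+1 = x by omega]
    rw [← Finset.prod_Ico_consecutive (fun q => 1 + aZ (insert x J) q)
      (by omega : 1 ≤ x) (by omega : x ≤ M+1)]
    congr 1
    · refine Finset.prod_congr rfl (fun q hq => ?_)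
      have hq' := Finset.mem_Ico.mp hq
      rw [aZ_insert hxJ, if_pos (by omega)]
      ring
    · refine Finset.prod_congr rfl (fun q hq => ?_)
      have hq' := Finset.mem_Ico.mp hq
      rw [aZ_insert hxJ, if_neg (by omega)]
      ring
  -- final computation
  have hsumu : ∑ i ∈ Finset.range (M+1), u i
      = (∑ i ∈ Finset.range (M+1), T i) - (∑ x ∈ J, T (x-1)) + aZ J 1 * T 0 := by
    have : ∀ i, i < M+1 → u i = T i - aZ J (i+1) * u i := by
      intro i hi
      have := hurel i hi
      linarith
    rw [Finset.sum_congr rfl (fun i hi => this i (Finset.mem_range.mp hi))]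
    rw [Finset.sum_sub_distrib, habel]
    ring
  have hcard : aZ J 1 = (J.card : ℤ) := aZ_all (fun x hx => by have := hmem x hx; omega)
  have hreidx' : ∑ x ∈ Finset.Icc 2 (M+1), T (x-1) = ∑ i ∈ Finset.range M, T (i+1) := by
    rw [hreidx (fun x => T (x-1))]
    refine Finset.sum_congr rfl (fun i _ => ?_)
    norm_num
  have hrange : ∑ i ∈ Finset.range (M+1), T i = T 0 + ∑ x ∈ Finset.Icc 2 (M+1), T (x-1) := by
    rw [Finset.sum_range_succ' T M, hreidx']
    ring
  have hsdiff : ∑ x ∈ Finset.Icc 2 (M+1) \ J, T (x-1)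
      = (∑ x ∈ Finset.Icc 2 (M+1), T (x-1)) - ∑ x ∈ J, T (x-1) := by
    have := Finset.sum_sdiff (f := fun x => T (x-1)) hJ
    linarith
  have hsum_eq : ∑ x ∈ Finset.Icc 2 (M+1) \ J, FF (insert x J) M
      = ∑ x ∈ Finset.Icc 2 (M+1) \ J, T (x-1) := by
    refine Finset.sum_congr rfl (fun x hx => ?_)
    have hx1 := Finset.mem_Icc.mp (Finset.mem_sdiff.mp hx).1
    exact hFx x hx1.1 hx1.2 (Finset.mem_sdiff.mp hx).2
  rw [hLHS, htel, hsumu, hrange, hsum_eq, hsdiff, hcard, ← hT0]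
  ring
lemma sum_powerset_image {f : ℕ → ℕ} {C : Finset ℕ}
    (hf : ∀ x ∈ C, ∀ y ∈ C, f x = f y → x = y) (g : Finset ℕ → ℤ) :
    ∑ J ∈ (C.image f).powerset, g J = ∑ J ∈ C.powerset, g (J.image f) := by
  have hps : (C.image f).powerset = C.powerset.image (fun t => t.image f) := by
    ext S
    simp only [Finset.mem_powerset, Finset.mem_image]
    constructor
    · intro hS
      refine ⟨C.filter (fun x => f x ∈ S), Finset.filter_subset _ _, ?_⟩
      ext y
      simp only [Finset.mem_image, Finset.mem_filter]
      constructor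
      · rintro ⟨x, ⟨hxC, hxS⟩, rfl⟩; exact hxS
      · intro hy
        obtain ⟨x, hxC, rfl⟩ := Finset.mem_image.mp (hS hy)
        exact ⟨x, ⟨hxC, hy⟩, rfl⟩
    · rintro ⟨t, ht, rfl⟩
      exact Finset.image_subset_image ht
  rw [hps, Finset.sum_image]
  intro t1 h1 t2 h2 he
  replace he : t1.image f = t2.image f := he
  have h1' := Finset.mem_powerset.mp h1
  have h2' := Finset.mem_powerset.mp h2
  ext x
  constructor
  · intro hx
    have : f x ∈ t2.image f := he ▸ Finset.mem_image_of_mem f hx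
    obtain ⟨y, hy, hxy⟩ := Finset.mem_image.mp this
    rwa [hf y (h2' hy) x (h1' hx) hxy] at hy
  · intro hx
    have : f x ∈ t1.image f := he ▸ Finset.mem_image_of_mem f hx
    obtain ⟨y, hy, hxy⟩ := Finset.mem_image.mp this
    rwa [hf y (h1' hy) x (h2' hx) hxy] at hy

lemma card_image_subset {f : ℕ → ℕ} {C J : Finset ℕ} (hJ : J ⊆ C)
    (hf : ∀ x ∈ C, ∀ y ∈ C, f x = f y → x = y) : (J.image f).card = J.card :=
  Finset.card_image_of_injOn (fun x hx y hy e => hf x (hJ hx) y (hJ hy) e)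

lemma s0_image {f : ℕ → ℕ} {C : Finset ℕ}
    (hf : ∀ x ∈ C, ∀ y ∈ C, f x = f y → x = y) (M : ℕ) :
    s0 (C.image f) M = ∑ J ∈ C.powerset, (-1)^J.card * FF (J.image f) M := by
  unfold s0
  rw [sum_powerset_image hf (fun J => (-1)^J.card * FF J M)]
  refine Finset.sum_congr rfl (fun J hJ => ?_)
  rw [card_image_subset (Finset.mem_powerset.mp hJ) hf]

lemma sum_powerset_mul_card (C : Finset ℕ) (g : Finset ℕ → ℤ) :
    ∑ J ∈ C.powerset, (-1)^J.card * ((C.card : ℤ) - J.card) * g J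
      = ∑ c ∈ C, ∑ J ∈ (C.erase c).powerset, (-1)^J.card * g J := by
  have h1 : ∀ c, (C.erase c).powerset = C.powerset.filter (fun J => c ∉ J) := by
    intro c
    ext J
    simp only [Finset.mem_powerset, Finset.mem_filter, Finset.subset_erase]
  have h2 : ∑ c ∈ C, ∑ J ∈ (C.erase c).powerset, (-1:ℤ)^J.card * g J
      = ∑ J ∈ C.powerset, ∑ c ∈ C, (if c ∉ J then (-1:ℤ)^J.card * g J else 0) := by
    rw [← Finset.sum_comm]
    refine Finset.sum_congr rfl (fun c _ => ?_)
    rw [h1 c, Finset.sum_filter]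
  rw [h2]
  refine Finset.sum_congr rfl (fun J hJ => ?_)
  have hJC := Finset.mem_powerset.mp hJ
  rw [Finset.sum_ite, Finset.sum_const, Finset.sum_const_zero, add_zero]
  rw [← Finset.sdiff_eq_filter, Finset.card_sdiff_of_subset hJC]
  rw [nsmul_eq_mul]
  have : ((C.card - J.card : ℕ) : ℤ) = (C.card : ℤ) - J.card := by
    have := Finset.card_le_card hJC
    push_cast [Nat.cast_sub this]
    ring
  rw [this]
  ring

lemma sum_pow_card_mul (C : Finset ℕ) (g : Finset ℕ → ℤ) :
    ∑ J ∈ C.powerset, (-1)^J.card * (J.card : ℤ) * g J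
      = (C.card : ℤ) * (∑ J ∈ C.powerset, (-1)^J.card * g J)
        - ∑ c ∈ C, ∑ J ∈ (C.erase c).powerset, (-1)^J.card * g J := by
  rw [← sum_powerset_mul_card C g, Finset.mul_sum, ← Finset.sum_sub_distrib]
  refine Finset.sum_congr rfl (fun J hJ => ?_)
  ring

lemma s0_dead {C : Finset ℕ} {M : ℕ} (h : ∀ x ∈ C, x ≤ M+1) : s0 C (M+1) = s0 C M := by
  unfold s0
  refine Finset.sum_congr rfl (fun J hJ => ?_)
  rw [FF_dead (fun x hx => h x (Finset.mem_powerset.mp hJ hx))]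

lemma s0_insert_split {a : ℕ} {C : Finset ℕ} (ha : a ∉ C) (M : ℕ) :
    s0 (insert a C) M = s0 C M - ∑ J ∈ C.powerset, (-1)^J.card * FF (insert a J) M := by
  unfold s0
  rw [Finset.sum_powerset_insert ha]
  have : ∀ J ∈ C.powerset, (-1:ℤ)^(insert a J).card * FF (insert a J) M
      = -((-1)^J.card * FF (insert a J) M) := by
    intro J hJ
    rw [Finset.card_insert_of_notMem (fun hc => ha (Finset.mem_powerset.mp hJ hc))]
    ring
  rw [Finset.sum_congr rfl this, Finset.sum_neg_distrib]
  ring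

lemma s0_shift2 {C : Finset ℕ} {M : ℕ} (h3 : ∀ x ∈ C, 3 ≤ x) (h2 : 2 ∉ C) :
    s0 (insert 2 C) (M+1) = - s0 (C.image (· - 1)) M := by
  have hinj : ∀ x ∈ C, ∀ y ∈ C, x - 1 = y - 1 → x = y := by
    intro x hx y hy e
    have := h3 x hx; have := h3 y hy; omega
  rw [s0_insert_split h2 (M+1)]
  have hterm : ∀ J ∈ C.powerset, (-1:ℤ)^J.card * FF (insert 2 J) (M+1)
      = (-1)^J.card * FF J (M+1) + (-1)^J.card * FF (J.image (· - 1)) M := by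
    intro J hJ
    have hJC := Finset.mem_powerset.mp hJ
    rw [FF_insert_two (fun x hx => h3 x (hJC hx)) (fun hc => by have := h3 2 (hJC hc); omega)]
    ring
  rw [Finset.sum_congr rfl hterm, Finset.sum_add_distrib]
  rw [s0_image hinj M]
  unfold s0
  ring

lemma s0_slot {C : Finset ℕ} {M : ℕ} (h3 : ∀ x ∈ C, 3 ≤ x) :
    s0 C (M+1) = ((C.card : ℤ)+1) * s0 (C.image (· - 1)) M
      - ∑ c ∈ C, s0 ((C.erase c).image (· - 1)) M := by
  have hinj : ∀ x ∈ C, ∀ y ∈ C, x - 1 = y - 1 → x = y := by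
    intro x hx y hy e
    have := h3 x hx; have := h3 y hy; omega
  have h1 : s0 C (M+1) = ∑ J ∈ C.powerset, (-1)^J.card * ((1:ℤ) + J.card) * FF (J.image (· - 1)) M := by
    unfold s0
    refine Finset.sum_congr rfl (fun J hJ => ?_)
    have hJC := Finset.mem_powerset.mp hJ
    rw [FF_shift (fun x hx => h3 x (hJC hx))]
    ring
  have h2 : ∀ J : Finset ℕ, (-1:ℤ)^J.card * ((1:ℤ) + J.card) * FF (J.image (· - 1)) M
      = (-1)^J.card * FF (J.image (· - 1)) M
        + (-1)^J.card * (J.card : ℤ) * FF (J.image (· - 1)) M := fun J => by ring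
  rw [h1, Finset.sum_congr rfl (fun J _ => h2 J), Finset.sum_add_distrib]
  rw [sum_pow_card_mul C (fun J => FF (J.image (· - 1)) M)]
  rw [← s0_image hinj M]
  have h3' : ∀ c ∈ C, ∑ J ∈ (C.erase c).powerset, (-1:ℤ)^J.card * FF (J.image (· - 1)) M
      = s0 ((C.erase c).image (· - 1)) M := by
    intro c hc
    rw [s0_image (fun x hx y hy e => hinj x (Finset.erase_subset c C hx) y (Finset.erase_subset c C hy) e) M]
  rw [Finset.sum_congr rfl h3']
  ring

lemma sum_insert_pairs (C : Finset ℕ) (g : Finset ℕ → ℕ → ℤ) :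
    ∑ J ∈ C.powerset, ∑ x ∈ C \ J, g (insert x J) x
      = ∑ J ∈ C.powerset, ∑ x ∈ J, g J x := by
  rw [Finset.sum_sigma' C.powerset (fun J => C \ J) (fun J x => g (insert x J) x)]
  rw [Finset.sum_sigma' C.powerset (fun J => J) (fun J x => g J x)]
  refine Finset.sum_nbij' (fun p => ⟨insert p.2 p.1, p.2⟩) (fun p => ⟨p.1.erase p.2, p.2⟩)
    ?_ ?_ ?_ ?_ ?_
  · rintro ⟨J, x⟩ hp
    simp only [Finset.mem_sigma, Finset.mem_powerset] at hp ⊢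
    obtain ⟨hJ, hx⟩ := hp
    have hx' := Finset.mem_sdiff.mp hx
    exact ⟨Finset.insert_subset hx'.1 hJ, Finset.mem_insert_self _ _⟩
  · rintro ⟨J, x⟩ hp
    simp only [Finset.mem_sigma, Finset.mem_powerset] at hp ⊢
    obtain ⟨hJ, hx⟩ := hp
    refine ⟨(Finset.erase_subset x J).trans hJ, Finset.mem_sdiff.mpr ⟨hJ hx, ?_⟩⟩
    simp
  · rintro ⟨J, x⟩ hp
    simp only [Finset.mem_sigma, Finset.mem_powerset] at hp
    have hx' := Finset.mem_sdiff.mp hp.2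
    simp only [Sigma.mk.inj_iff, heq_eq_eq, and_true]
    exact Finset.erase_insert hx'.2
  · rintro ⟨J, x⟩ hp
    simp only [Finset.mem_sigma, Finset.mem_powerset] at hp
    simp only [Sigma.mk.inj_iff, heq_eq_eq, and_true]
    exact Finset.insert_erase hp.2
  · rintro ⟨J, x⟩ _
    rfl

lemma s0_top {C : Finset ℕ} {M : ℕ} (hC : C ⊆ Finset.Icc 2 (M+1)) :
    s0 (insert (M+2) C) (M+1)
      = -((M:ℤ) + 1 - C.card) * s0 C M
        + ∑ x ∈ Finset.Icc 2 (M+1) \ C, s0 (insert x C) M := by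
  have hMC : M+2 ∉ C := fun hc => by have := Finset.mem_Icc.mp (hC hc); omega
  rw [s0_insert_split hMC (M+1)]
  have hdead : s0 C (M+1) = s0 C M :=
    s0_dead (fun x hx => by have := Finset.mem_Icc.mp (hC hx); omega)
  have hterm : ∀ J ∈ C.powerset, (-1:ℤ)^J.card * FF (insert (M+2) J) (M+1)
      = (-1)^J.card * (((J.card:ℤ)+2) * FF J M)
        + (-1)^J.card * ∑ x ∈ Finset.Icc 2 (M+1) \ J, FF (insert x J) M := by
    intro J hJ
    rw [FF_top ((Finset.mem_powerset.mp hJ).trans hC)]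
    ring
  rw [Finset.sum_congr rfl hterm, Finset.sum_add_distrib]
  -- first piece
  have hA : ∑ J ∈ C.powerset, (-1:ℤ)^J.card * (((J.card:ℤ)+2) * FF J M)
      = ((C.card:ℤ)+2) * s0 C M - ∑ c ∈ C, s0 (C.erase c) M := by
    have e : ∀ J : Finset ℕ, (-1:ℤ)^J.card * (((J.card:ℤ)+2) * FF J M)
        = (-1)^J.card * (J.card:ℤ) * FF J M + 2 * ((-1)^J.card * FF J M) := fun J => by ring
    rw [Finset.sum_congr rfl (fun J _ => e J), Finset.sum_add_distrib]
    rw [sum_pow_card_mul C (fun J => FF J M), ← Finset.mul_sum]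
    unfold s0
    ring
  -- second piece : split the x-range
  have hsplit : ∀ J ∈ C.powerset,
      (-1:ℤ)^J.card * ∑ x ∈ Finset.Icc 2 (M+1) \ J, FF (insert x J) M
        = (∑ x ∈ Finset.Icc 2 (M+1) \ C, (-1:ℤ)^J.card * FF (insert x J) M)
          + ∑ x ∈ C \ J, (-1:ℤ)^J.card * FF (insert x J) M := by
    intro J hJ
    have hJC := Finset.mem_powerset.mp hJ
    have hun : Finset.Icc 2 (M+1) \ J = (Finset.Icc 2 (M+1) \ C) ∪ (C \ J) := by
      ext y
      simp only [Finset.mem_sdiff, Finset.mem_union]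
      constructor
      · rintro ⟨hy, hyJ⟩
        by_cases hyC : y ∈ C
        · exact Or.inr ⟨hyC, hyJ⟩
        · exact Or.inl ⟨hy, hyC⟩
      · rintro (⟨hy, hyC⟩ | ⟨hyC, hyJ⟩)
        · exact ⟨hy, fun hc => hyC (hJC hc)⟩
        · exact ⟨hC hyC, hyJ⟩
    have hdis : Disjoint (Finset.Icc 2 (M+1) \ C) (C \ J) := by
      rw [Finset.disjoint_left]
      rintro y hy hy'
      exact (Finset.mem_sdiff.mp hy).2 (Finset.mem_sdiff.mp hy').1
    rw [hun, Finset.sum_union hdis, mul_add, Finset.mul_sum, Finset.mul_sum]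
  rw [Finset.sum_congr rfl hsplit, Finset.sum_add_distrib]
  -- part (a)
  have ha : ∑ J ∈ C.powerset, ∑ x ∈ Finset.Icc 2 (M+1) \ C, (-1:ℤ)^J.card * FF (insert x J) M
      = ∑ x ∈ Finset.Icc 2 (M+1) \ C, (s0 C M - s0 (insert x C) M) := by
    rw [Finset.sum_comm]
    refine Finset.sum_congr rfl (fun x hx => ?_)
    have hxC : x ∉ C := (Finset.mem_sdiff.mp hx).2
    have := s0_insert_split hxC M
    linarith
  -- part (b)
  have hb : ∑ J ∈ C.powerset, ∑ x ∈ C \ J, (-1:ℤ)^J.card * FF (insert x J) M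
      = -(∑ J ∈ C.powerset, (-1:ℤ)^J.card * (J.card:ℤ) * FF J M) := by
    have e : ∀ J ∈ C.powerset, ∀ x ∈ C \ J,
        (-1:ℤ)^J.card * FF (insert x J) M
          = -((-1:ℤ)^(insert x J).card * FF (insert x J) M) := by
      intro J hJ x hx
      rw [Finset.card_insert_of_notMem (Finset.mem_sdiff.mp hx).2]
      ring
    rw [Finset.sum_congr rfl (fun J hJ =>
      Finset.sum_congr rfl (fun x hx => e J hJ x hx))]
    rw [sum_insert_pairs C (fun J x => -((-1:ℤ)^J.card * FF J M))]
    rw [← Finset.sum_neg_distrib]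
    refine Finset.sum_congr rfl (fun J hJ => ?_)
    rw [Finset.sum_const, nsmul_eq_mul]
    ring
  have hbb : ∑ J ∈ C.powerset, (-1:ℤ)^J.card * (J.card:ℤ) * FF J M
      = (C.card:ℤ) * s0 C M - ∑ c ∈ C, s0 (C.erase c) M := by
    rw [sum_pow_card_mul C (fun J => FF J M)]
    unfold s0
    ring
  have hicc : ((Finset.Icc 2 (M+1) \ C).card : ℤ) = (M:ℤ) - C.card := by
    rw [Finset.card_sdiff_of_subset hC, Nat.card_Icc]
    have h1 : C.card ≤ M := by
      have := Finset.card_le_card hC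
      rw [Nat.card_Icc] at this
      omega
    push_cast [Nat.cast_sub]
    omega
  rw [hdead, hA, ha, hb, hbb]
  rw [Finset.sum_sub_distrib, Finset.sum_const, nsmul_eq_mul]
  have : ((Finset.Icc 2 (M+1) \ C).card : ℤ) * s0 C M = ((M:ℤ) - C.card) * s0 C M := by
    rw [hicc]
  rw [this]
  ring
lemma image_erase_of_injOn {f : ℕ → ℕ} {S : Finset ℕ} {x : ℕ} (hx : x ∈ S)
    (hf : ∀ a ∈ S, ∀ b ∈ S, f a = f b → a = b) :
    (S.erase x).image f = (S.image f).erase (f x) := by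
  ext y
  simp only [Finset.mem_image, Finset.mem_erase]
  constructor
  · rintro ⟨a, ⟨hax, haS⟩, rfl⟩
    exact ⟨fun e => hax (hf a haS x hx e), a, haS, rfl⟩
  · rintro ⟨hy, a, haS, rfl⟩
    exact ⟨a, ⟨fun e => hy (e ▸ rfl), haS⟩, rfl⟩

theorem dual0 : ∀ (M : ℕ) (C : Finset ℕ), C ⊆ Finset.Icc 2 (M+1) →
    s0 C M = (-1)^M * s0 ((Finset.Icc 2 (M+1) \ C).image (fun x => M+3-x)) M := by
  intro M
  induction M with
  | zero =>
    intro C hC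
    have hicc : Finset.Icc 2 (0+1) = (∅ : Finset ℕ) := by
      apply Finset.Icc_eq_empty; omega
    have hCe : C = ∅ := Finset.subset_empty.mp (hicc ▸ hC)
    subst hCe
    rw [hicc]
    simp [s0]
  | succ M IH =>
    intro C hC
    -- normalize the reflection function
    rw [show M+1+3 = M+4 by omega] at *
    -- key sub-lemma : the case M+2 ∈ C
    have key : ∀ C₀ : Finset ℕ, C₀ ⊆ Finset.Icc 2 (M+1) →
        s0 (insert (M+2) C₀) (M+1)
          = (-1)^(M+1) * s0 ((Finset.Icc 2 (M+2) \ insert (M+2) C₀).image (fun x => M+4-x)) (M+1) := by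
      intro C₀ hC₀
      have hsd : Finset.Icc 2 (M+2) \ insert (M+2) C₀ = Finset.Icc 2 (M+1) \ C₀ := by
        ext x
        simp only [Finset.mem_sdiff, Finset.mem_Icc, Finset.mem_insert]
        constructor
        · rintro ⟨⟨h1, h2⟩, h3⟩
          push_neg at h3
          exact ⟨⟨h1, by omega⟩, h3.2⟩
        · rintro ⟨⟨h1, h2⟩, h3⟩
          exact ⟨⟨h1, by omega⟩, by push_neg; exact ⟨by omega, h3⟩⟩
      rw [hsd]
      set S := Finset.Icc 2 (M+1) \ C₀ with hSdef
      have hSmem : ∀ x ∈ S, 2 ≤ x ∧ x ≤ M+1 := by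
        intro x hx
        exact Finset.mem_Icc.mp (Finset.mem_sdiff.mp hx).1
      set D : Finset ℕ := S.image (fun x => M+4-x) with hDdef
      set D' : Finset ℕ := S.image (fun x => M+3-x) with hD'def
      have hinj1 : ∀ a ∈ S, ∀ b ∈ S, M+4-a = M+4-b → a = b := by
        intro a ha b hb e
        have := hSmem a ha; have := hSmem b hb; omega
      have hinj0 : ∀ a ∈ S, ∀ b ∈ S, M+3-a = M+3-b → a = b := by
        intro a ha b hb e
        have := hSmem a ha; have := hSmem b hb; omega
      have hDmem : ∀ y ∈ D, 3 ≤ y ∧ y ≤ M+2 := by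
        intro y hy
        obtain ⟨x, hx, rfl⟩ := Finset.mem_image.mp hy
        have := hSmem x hx; omega
      have hinjD : ∀ a ∈ D, ∀ b ∈ D, a - 1 = b - 1 → a = b := by
        intro a ha b hb e
        have := hDmem a ha; have := hDmem b hb; omega
      have hDD' : D.image (fun x => x-1) = D' := by
        rw [hDdef, Finset.image_image]
        refine Finset.image_congr (fun x hx => ?_)
        show (M+4-x)-1 = M+3-x
        omega
      have hcard : (D.card : ℤ) = (M : ℤ) - C₀.card := by
        have h1 : D.card = S.card := Finset.card_image_of_injOn hinj1
        have h3 : C₀.card ≤ M := by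
          have := Finset.card_le_card hC₀
          rw [Nat.card_Icc] at this
          omega
        have h2 : S.card = M - C₀.card := by
          rw [hSdef, Finset.card_sdiff_of_subset hC₀, Nat.card_Icc]
          omega
        rw [h1, h2]
        push_cast [Nat.cast_sub h3]
        ring
      have hsum1 : ∑ d ∈ D, s0 ((D.erase d).image (fun x => x-1)) M
          = ∑ x ∈ S, s0 (D'.erase (M+3-x)) M := by
        rw [hDdef, Finset.sum_image hinj1]
        refine Finset.sum_congr rfl (fun x hx => ?_)
        have hmem : M+4-x ∈ D := by
          rw [hDdef]; exact Finset.mem_image_of_mem _ hx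
        rw [image_erase_of_injOn hmem hinjD, hDD']
        show s0 (D'.erase (M+4-x-1)) M = s0 (D'.erase (M+3-x)) M
        rw [show M+4-x-1 = M+3-x from by omega]
      have hsum2 : ∑ x ∈ S, s0 (insert x C₀) M
          = (-1)^M * ∑ x ∈ S, s0 (D'.erase (M+3-x)) M := by
        rw [Finset.mul_sum]
        refine Finset.sum_congr rfl (fun x hx => ?_)
        have hxIcc : x ∈ Finset.Icc 2 (M+1) := (Finset.mem_sdiff.mp hx).1
        have hxC₀ : x ∉ C₀ := (Finset.mem_sdiff.mp hx).2
        have hins : insert x C₀ ⊆ Finset.Icc 2 (M+1) :=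
          Finset.insert_subset hxIcc hC₀
        rw [IH (insert x C₀) hins]
        have hset : (Finset.Icc 2 (M+1) \ insert x C₀).image (fun x => M+3-x)
            = D'.erase (M+3-x) := by
          rw [Finset.sdiff_insert, ← hSdef]
          exact image_erase_of_injOn hx hinj0
        rw [hset]
      have hC₀dual := IH C₀ hC₀
      rw [← hSdef] at hC₀dual
      have hslot : s0 D (M+1) = ((D.card : ℤ)+1) * s0 D' M - ∑ x ∈ S, s0 (D'.erase (M+3-x)) M := by
        rw [s0_slot (fun y hy => (hDmem y hy).1), hDD', hsum1]
      rw [s0_top hC₀, ← hSdef, hsum2, hC₀dual, hslot, hcard]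
      ring
    -- main case split
    by_cases hN : M+2 ∈ C
    · have hC₀ : C.erase (M+2) ⊆ Finset.Icc 2 (M+1) := by
        intro x hx
        have hx1 := Finset.mem_erase.mp hx
        have hx2 := Finset.mem_Icc.mp (hC hx1.2)
        rw [Finset.mem_Icc]
        omega
      have := key (C.erase (M+2)) hC₀
      rwa [Finset.insert_erase hN] at this
    · by_cases h2 : 2 ∈ C
      · -- shift case
        set C₂ := C.erase 2 with hC₂def
        have hCi : C = insert 2 C₂ := (Finset.insert_erase h2).symm
        have h3 : ∀ x ∈ C₂, 3 ≤ x := by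
          intro x hx
          have hx1 := Finset.mem_erase.mp hx
          have hx2 := Finset.mem_Icc.mp (hC hx1.2)
          omega
        have h2n : 2 ∉ C₂ := by simp [hC₂def]
        have himg_sub : C₂.image (fun x => x-1) ⊆ Finset.Icc 2 (M+1) := by
          intro y hy
          obtain ⟨x, hx, rfl⟩ := Finset.mem_image.mp hy
          have := h3 x hx
          have := Finset.mem_Icc.mp (hC (Finset.erase_subset _ _ hx))
          rw [Finset.mem_Icc]
          omega
        have hsetid : (Finset.Icc 2 (M+1) \ C₂.image (fun x => x-1)).image (fun x => M+3-x)
            = (Finset.Icc 2 (M+2) \ C).image (fun x => M+4-x) := by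
          ext y
          simp only [Finset.mem_image, Finset.mem_sdiff, Finset.mem_Icc]
          constructor
          · rintro ⟨z, ⟨⟨hz2, hzM⟩, hznot⟩, rfl⟩
            refine ⟨z+1, ⟨⟨by omega, by omega⟩, fun hzc => ?_⟩, by omega⟩
            rw [hCi] at hzc
            rcases Finset.mem_insert.mp hzc with he | hzc₂
            · omega
            · exact hznot ⟨z+1, hzc₂, by omega⟩
          · rintro ⟨x, ⟨⟨hx2, hxM⟩, hxnot⟩, rfl⟩
            have hxne2 : x ≠ 2 := fun e => hxnot (e ▸ h2)
            refine ⟨x-1, ⟨⟨by omega, by omega⟩, fun hz => ?_⟩, by omega⟩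
            obtain ⟨w, hw, hwe⟩ := hz
            have hw3 := h3 w hw
            have hwx : w = x := by omega
            exact hxnot (hwx ▸ Finset.erase_subset _ _ hw)
        have hDle : ∀ y ∈ (Finset.Icc 2 (M+2) \ C).image (fun x => M+4-x), y ≤ M+1 := by
          intro y hy
          obtain ⟨x, hx, rfl⟩ := Finset.mem_image.mp hy
          have hx1 := Finset.mem_sdiff.mp hx
          have hx2 := Finset.mem_Icc.mp hx1.1
          have hxne2 : x ≠ 2 := fun e => hx1.2 (e ▸ h2)
          omega
        conv_lhs => rw [hCi]
        rw [s0_shift2 h3 h2n, IH (C₂.image (fun x => x-1)) himg_sub, hsetid,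
          ← s0_dead hDle, pow_succ]
        ring
      · -- reflection case : apply key to the dual
        set D : Finset ℕ := (Finset.Icc 2 (M+2) \ C).image (fun x => M+4-x) with hDdef
        have hDmem : ∀ y ∈ D, 2 ≤ y ∧ y ≤ M+2 := by
          intro y hy
          obtain ⟨x, hx, rfl⟩ := Finset.mem_image.mp hy
          have := Finset.mem_Icc.mp (Finset.mem_sdiff.mp hx).1
          omega
        have hND : M+2 ∈ D := by
          rw [hDdef]
          refine Finset.mem_image.mpr ⟨2, Finset.mem_sdiff.mpr ⟨Finset.mem_Icc.mpr ⟨le_refl 2, by omega⟩, h2⟩, by omega⟩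
        have hD₀ : D.erase (M+2) ⊆ Finset.Icc 2 (M+1) := by
          intro y hy
          have hy1 := Finset.mem_erase.mp hy
          have hy2 := hDmem y hy1.2
          rw [Finset.mem_Icc]
          omega
        have hkey := key (D.erase (M+2)) hD₀
        rw [Finset.insert_erase hND] at hkey
        have hinv : (Finset.Icc 2 (M+2) \ D).image (fun x => M+4-x) = C := by
          ext y
          simp only [Finset.mem_image, Finset.mem_sdiff, Finset.mem_Icc]
          constructor
          · rintro ⟨x, ⟨⟨hx2, hxM⟩, hxnot⟩, rfl⟩
            by_contra hyC
            apply hxnot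
            rw [hDdef]
            refine Finset.mem_image.mpr ⟨M+4-x, Finset.mem_sdiff.mpr ⟨Finset.mem_Icc.mpr ⟨by omega, by omega⟩, hyC⟩, by omega⟩
          · intro hyC
            have hy2 := Finset.mem_Icc.mp (hC hyC)
            refine ⟨M+4-y, ⟨⟨by omega, by omega⟩, fun hx => ?_⟩, by omega⟩
            rw [hDdef] at hx
            obtain ⟨z, hz, hze⟩ := Finset.mem_image.mp hx
            have hz1 := Finset.mem_sdiff.mp hz
            have hz2 := Finset.mem_Icc.mp hz1.1
            have : z = y := by omega
            exact hz1.2 (this ▸ hyC)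
        rw [hinv] at hkey
        rw [hkey, ← mul_assoc, ← pow_add]
        have : Even ((M+1) + (M+1)) := ⟨M+1, by ring⟩
        rw [this.neg_one_pow, one_mul]
lemma enumFrom_map_prod (β : List ℕ) : ∀ (n : ℕ) (g : ℕ × ℕ → ℕ),
    ((β.zipIdx n).map g).prod = (β.zipIdx.map (fun p => g (p.1, p.2 + n))).prod := by
  induction β with
  | nil => intro n g; rfl
  | cons a β ih =>
    intro n g
    rw [List.zipIdx_cons, List.map_cons, List.prod_cons]
    rw [List.zipIdx_cons, List.map_cons, List.prod_cons]
    rw [ih (n+1) g, ih 1 (fun p => g (p.1, p.2 + n))]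
    show g (a, n) * (List.map (fun p : ℕ × ℕ => g (p.1, p.2 + (n + 1))) β.zipIdx).prod
      = g (a, 0 + n) * (List.map (fun p : ℕ × ℕ => g (p.1, p.2 + 1 + n)) β.zipIdx).prod
    rw [Nat.zero_add]
    have hf : (fun p : ℕ × ℕ => g (p.1, p.2 + (n + 1)))
        = (fun p : ℕ × ℕ => g (p.1, p.2 + 1 + n)) := by
      funext p
      have : p.2 + (n + 1) = p.2 + 1 + n := by omega
      rw [this]
    rw [hf]

lemma hatFac_cons (b : ℕ) (β : List ℕ) : hatFac (b :: β) = (β.length + 2)^b * hatFac β := by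
  unfold hatFac
  rw [List.zipIdx_cons, List.map_cons, List.prod_cons]
  rw [enumFrom_map_prod β (0+1) (fun p => ((b :: β).length + 1 - p.2) ^ p.1)]
  show ((b :: β).length + 1 - 0) ^ b
      * (List.map (fun p : ℕ × ℕ => ((b :: β).length + 1 - (p.2 + 1)) ^ p.1) β.zipIdx).prod
    = (β.length + 2) ^ b * (List.map (fun p => (β.length + 1 - p.2) ^ p.1) β.zipIdx).prod
  have hh : (b :: β).length + 1 - 0 = β.length + 2 := by
    simp only [List.length_cons]
    omega
  have hf : (fun p : ℕ × ℕ => ((b :: β).length + 1 - (p.2 + 1)) ^ p.1)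
      = (fun p : ℕ × ℕ => (β.length + 1 - p.2) ^ p.1) := by
    funext p
    congr 1
    simp only [List.length_cons]
    omega
  rw [hh, hf]


lemma sort_countP (X : Finset ℕ) (q : ℕ) :
    ((X.sort (· ≤ ·)).countP (fun x => decide (q < x))) = (X.filter (fun x => q < x)).card := by
  rw [(Finset.sort_perm_toList X (· ≤ ·)).countP_eq]
  rw [← Multiset.coe_countP, Finset.coe_toList]
  rw [Multiset.countP_eq_card_filter]
  rfl

lemma hat_list : ∀ (L : List ℕ) (c M : ℕ), 1 ≤ c → List.Pairwise (· < ·) L →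
    (∀ x ∈ L, c ≤ x) → (∀ x ∈ L, x ≤ M+1) →
    (hatFac (List.zipWith (fun a b => b - a) (c :: L) L) : ℤ)
      = ∏ q ∈ Finset.Ico c (M+1), (1 + (L.countP (fun x => decide (q < x)) : ℤ)) := by
  intro L
  induction L with
  | nil =>
    intro c M hc _ _ _
    simp [hatFac]
  | cons x L ih =>
    intro c M hc hsort hcle hle
    have hcx : c ≤ x := hcle x List.mem_cons_self
    have hxM : x ≤ M+1 := hle x List.mem_cons_self
    have hxlt : ∀ y ∈ L, x < y := fun y hy => (List.pairwise_cons.mp hsort).1 y hy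
    rw [show List.zipWith (fun a b => b - a) (c :: x :: L) (x :: L)
        = (x - c) :: List.zipWith (fun a b => b - a) (x :: L) L from rfl]
    rw [hatFac_cons]
    have hlen : (List.zipWith (fun a b => b - a) (x :: L) L).length = L.length := by
      rw [List.length_zipWith]; simp
    rw [hlen]
    have hih := ih x M (by omega) ((List.pairwise_cons.mp hsort).2)
      (fun y hy => le_of_lt (hxlt y hy)) (fun y hy => hle y (List.mem_cons_of_mem x hy))
    push_cast
    rw [hih]
    rw [← Finset.prod_Ico_consecutive
      (fun q => (1 + ((x::L).countP (fun z => decide (q < z)) : ℤ))) hcx (by omega : x ≤ M+1)]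
    have h1 : ∏ q ∈ Finset.Ico c x, (1 + (((x::L).countP (fun z => decide (q < z)) : ℕ) : ℤ))
        = ((L.length : ℤ) + 2)^(x - c) := by
      have hconst : ∀ q ∈ Finset.Ico c x,
          (1 + (((x::L).countP (fun z => decide (q < z)) : ℕ) : ℤ)) = (L.length : ℤ) + 2 := by
        intro q hq
        have hq' := Finset.mem_Ico.mp hq
        have hcnt : (x::L).countP (fun z => decide (q < z)) = (x::L).length := by
          rw [List.countP_eq_length]
          intro z hz
          rcases List.mem_cons.mp hz with rfl | hz'
          · exact decide_eq_true (by omega)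
          · exact decide_eq_true (by have := hxlt z hz'; omega)
        rw [hcnt]
        simp [List.length_cons]
        push_cast
        ring
      rw [Finset.prod_congr rfl hconst, Finset.prod_const, Nat.card_Ico]
    have h2 : ∀ q ∈ Finset.Ico x (M+1),
        (1 + (((x::L).countP (fun z => decide (q < z)) : ℕ) : ℤ))
          = 1 + ((L.countP (fun z => decide (q < z)) : ℕ) : ℤ) := by
      intro q hq
      have hq' := Finset.mem_Ico.mp hq
      rw [List.countP_cons]
      have hd : decide (q < x) = false := decide_eq_false (by omega)
      rw [hd]
      simp
    rw [h1, Finset.prod_congr rfl h2]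

lemma alphaHat_eq_FF {X : Finset ℕ} {M : ℕ} (h1 : ∀ x ∈ X, 1 ≤ x) (h2 : ∀ x ∈ X, x ≤ M+1) :
    (alphaHat X : ℤ) = FF X M := by
  unfold alphaHat FF
  rw [hat_list (X.sort (· ≤ ·)) 1 M le_rfl (Finset.sortedLT_sort X).pairwise
    (fun x hx => h1 x ((Finset.mem_sort _).mp hx))
    (fun x hx => h2 x ((Finset.mem_sort _).mp hx))]
  refine Finset.prod_congr rfl (fun q _ => ?_)
  unfold aZ
  rw [sort_countP X q]
/-- Sequential combinatorial sums, with `τ_n(i) = n+3-i` and `J^max = J ∪ {n+2}`. -/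
theorem sequential_sums (n : ℕ) (K : Finset ℕ) (hK : K ⊆ Finset.Icc 2 (n+1)) :
    ∑ J ∈ (Finset.Icc 2 (n+1) \ K).powerset,
        (-1 : ℤ) ^ (n - K.card - J.card) *
          ((alphaHat (insert (n+2) J) : ℤ) - (alphaHat J : ℤ)) =
      ∑ J ∈ K.powerset,
        (-1 : ℤ) ^ (K.card - J.card) * (J.card + 1) *
          alphaHat (J.image (fun j => n + 3 - j)) := by
  set A := Finset.Icc 2 (n+1) \ K with hAdef
  have hKmem : ∀ j ∈ K, 2 ≤ j ∧ j ≤ n+1 := fun j hj => Finset.mem_Icc.mp (hK hj)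
  have hKn : K.card ≤ n := by
    have := Finset.card_le_card hK
    rw [Nat.card_Icc] at this
    omega
  have hAcard : A.card = n - K.card := by
    rw [hAdef, Finset.card_sdiff_of_subset hK, Nat.card_Icc]
    omega
  have hAmem : ∀ x ∈ A, 2 ≤ x ∧ x ≤ n+1 := by
    intro x hx
    exact Finset.mem_Icc.mp (Finset.mem_sdiff.mp hx).1
  have hn2A : n+2 ∉ A := fun hc => by have := hAmem _ hc; omega
  set C := insert (n+2) A with hCdef
  -- LHS transformation
  have hsum1 : ∑ J ∈ A.powerset,
      (-1:ℤ)^(n - K.card - J.card) * ((alphaHat (insert (n+2) J) : ℤ) - (alphaHat J : ℤ))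
      = ∑ J ∈ A.powerset, ((-1:ℤ)^A.card * ((-1)^J.card * FF (insert (n+2) J) (n+1))
          - (-1:ℤ)^A.card * ((-1)^J.card * FF J (n+1))) := by
    refine Finset.sum_congr rfl (fun J hJ => ?_)
    have hJA := Finset.mem_powerset.mp hJ
    have hJc : J.card ≤ A.card := Finset.card_le_card hJA
    have hexp : n - K.card - J.card = A.card - J.card := by omega
    have hb1 : (alphaHat (insert (n+2) J) : ℤ) = FF (insert (n+2) J) (n+1) := by
      refine alphaHat_eq_FF (fun x hx => ?_) (fun x hx => ?_) <;>
      · rcases Finset.mem_insert.mp hx with rfl | hx'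
        · omega
        · have := hAmem x (hJA hx'); omega
    have hb2 : (alphaHat J : ℤ) = FF J (n+1) := by
      refine alphaHat_eq_FF (fun x hx => ?_) (fun x hx => ?_) <;>
      · have := hAmem x (hJA hx); omega
    rw [hexp, neg_one_pow_sub hJc, hb1, hb2]
    ring
  have hins := s0_insert_split hn2A (n+1)
  have hEL : ∑ J ∈ A.powerset,
      (-1:ℤ)^(n - K.card - J.card) * ((alphaHat (insert (n+2) J) : ℤ) - (alphaHat J : ℤ))
      = -((-1:ℤ)^A.card * s0 C (n+1)) := by
    rw [hsum1, Finset.sum_sub_distrib, ← Finset.mul_sum, ← Finset.mul_sum]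
    have h1 : ∑ J ∈ A.powerset, (-1:ℤ)^J.card * FF J (n+1) = s0 A (n+1) := rfl
    have h2 : ∑ J ∈ A.powerset, (-1:ℤ)^J.card * FF (insert (n+2) J) (n+1)
        = s0 A (n+1) - s0 C (n+1) := by
      rw [hCdef]; linarith
    rw [h1, h2]
    ring
  -- RHS transformation
  have hinjK : ∀ a ∈ K, ∀ b ∈ K, n+4-a = n+4-b → a = b := by
    intro a ha b hb e
    have := hKmem a ha; have := hKmem b hb; omega
  have hER : ∑ J ∈ K.powerset,
      (-1:ℤ)^(K.card - J.card) * (J.card + 1) * (alphaHat (J.image (fun j => n + 3 - j)) : ℤ)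
      = (-1:ℤ)^K.card * s0 (K.image (fun j => n+4-j)) (n+1) := by
    have hstep : ∀ J ∈ K.powerset,
        (-1:ℤ)^(K.card - J.card) * (J.card + 1) * (alphaHat (J.image (fun j => n + 3 - j)) : ℤ)
          = (-1:ℤ)^K.card * ((-1)^J.card * FF (J.image (fun j => n+4-j)) (n+1)) := by
      intro J hJ
      have hJK := Finset.mem_powerset.mp hJ
      have hJc : J.card ≤ K.card := Finset.card_le_card hJK
      have hJmem : ∀ j ∈ J, 2 ≤ j ∧ j ≤ n+1 := fun j hj => hKmem j (hJK hj)
      have h3' : ∀ y ∈ J.image (fun j => n+4-j), 3 ≤ y := by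
        intro y hy
        obtain ⟨j, hj, rfl⟩ := Finset.mem_image.mp hy
        have := hJmem j hj; omega
      have hcomp : (J.image (fun j => n+4-j)).image (fun x => x-1)
          = J.image (fun j => n+3-j) := by
        rw [Finset.image_image]
        refine Finset.image_congr (fun j _ => ?_)
        show (n+4-j)-1 = n+3-j
        omega
      have hcardJ : (J.image (fun j => n+4-j)).card = J.card :=
        Finset.card_image_of_injOn
          (fun a ha b hb e => hinjK a (hJK ha) b (hJK hb) e)
      have hb : (alphaHat (J.image (fun j => n+3-j)) : ℤ) = FF (J.image (fun j => n+3-j)) n := by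
        refine alphaHat_eq_FF (fun x hx => ?_) (fun x hx => ?_) <;>
        · obtain ⟨j, hj, rfl⟩ := Finset.mem_image.mp hx
          have := hJmem j hj; omega
      rw [neg_one_pow_sub hJc, hb, FF_shift h3', hcomp, hcardJ]
      push_cast
      ring
    rw [Finset.sum_congr rfl hstep, ← Finset.mul_sum]
    congr 1
    exact (s0_image hinjK (n+1)).symm
  -- duality
  have hCsub : C ⊆ Finset.Icc 2 (n+2) := by
    rw [hCdef]
    refine Finset.insert_subset (Finset.mem_Icc.mpr ⟨by omega, by omega⟩) ?_
    intro x hx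
    have := hAmem x hx
    rw [Finset.mem_Icc]
    omega
  have hdual := dual0 (n+1) C (by simpa using hCsub)
  rw [show n+1+3 = n+4 by omega] at hdual
  have hsd : Finset.Icc 2 (n+1+1) \ C = K := by
    ext x
    simp only [hCdef, Finset.mem_sdiff, Finset.mem_Icc, Finset.mem_insert]
    constructor
    · rintro ⟨⟨h1, h2⟩, h3⟩
      push_neg at h3
      by_contra hxK
      exact h3.2 (Finset.mem_sdiff.mpr ⟨Finset.mem_Icc.mpr ⟨h1, by omega⟩, hxK⟩)
    · intro hxK
      have hxb := hKmem x hxK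
      refine ⟨⟨by omega, by omega⟩, ?_⟩
      push_neg
      exact ⟨by omega, fun hxA => (Finset.mem_sdiff.mp hxA).2 hxK⟩
  rw [hsd] at hdual
  rw [hEL, hER, hdual]
  have hA' : (-1:ℤ)^A.card = (-1)^n * (-1)^K.card := by
    rw [hAcard]; exact neg_one_pow_sub hKn
  have hsq : (-1:ℤ)^n * (-1)^n = 1 := by
    rw [← pow_add]; exact Even.neg_one_pow ⟨n, by ring⟩
  rw [hA', pow_succ]
  calc -((-1:ℤ)^n * (-1)^K.card * ((-1)^n * -1 * s0 (K.image fun x => n+4-x) (n+1)))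
      = ((-1:ℤ)^n * (-1)^n) * ((-1)^K.card * s0 (K.image fun x => n+4-x) (n+1)) := by ring
    _ = (-1:ℤ)^K.card * s0 (K.image fun x => n+4-x) (n+1) := by rw [hsq]; ring
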